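/- For real x > 0, Γ̃(x) = lim_{m→∞} (1/x)·∏_{k=1}^{m} (2k/(x+2k))·((x+2k−1)/(2k−1)); equivalently, x·Γ̃(x) = ∏_{k=1}^{∞} (2k(x+2k−1))/((2k−1)(x+2k)). -/

import Mathlib

open Filter Topology

noncomputable def Gammat (x : ℝ) : ℝ :=
  Real.Gamma (x / 2) * Real.sqrt Real.pi / (2 * Real.Gamma ((x + 1) / 2))

theorem Gammat_prod_repr (x : ℝ) (hx : 0 < x) :
    Tendsto (fun m : ℕ => (1 / x) * ∏ k ∈ Finset.Icc 1 m,
        (2 * (k : ℝ) / (x + 2 * k)) * ((x + 2 * k - 1) / (2 * k - 1)))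
      atTop (𝓝 (Gammat x)) := by
  have ha : 0 < x / 2 := by linarith
  have hb : 0 < (x + 1) / 2 := by linarith
  have hc : (0 : ℝ) < 1 / 2 := by norm_num
  -- the tail factor tends to 1
  have htail : Tendsto (fun m : ℕ => ((1 : ℝ) / 2 + m) / ((x + 1) / 2 + m)) atTop (𝓝 1) := by
    have hbtop : Tendsto (fun m : ℕ => (x + 1) / 2 + (m : ℝ)) atTop atTop :=
      tendsto_atTop_add_const_left _ _ tendsto_natCast_atTop_atTop
    have h0 : Tendsto (fun m : ℕ => ((1 : ℝ) / 2 - (x + 1) / 2) / ((x + 1) / 2 + m)) atTop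
        (𝓝 0) := Tendsto.div_atTop tendsto_const_nhds hbtop
    have := tendsto_const_nhds (x := (1 : ℝ)) (f := atTop (α := ℕ)) |>.add h0
    rw [add_zero] at this
    refine this.congr fun m => ?_
    have hbm : (0 : ℝ) < (x + 1) / 2 + m := by positivity
    field_simp
    ring
  -- main limit of the GammaSeq expression
  have hmain : Tendsto (fun m : ℕ => (1 / 2) * Real.GammaSeq (x / 2) m *
      Real.GammaSeq (1 / 2) m / Real.GammaSeq ((x + 1) / 2) m *
      (((1 : ℝ) / 2 + m) / ((x + 1) / 2 + m))) atTop (𝓝 (Gammat x)) := by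
    have hΓb : Real.Gamma ((x + 1) / 2) ≠ 0 := (Real.Gamma_pos_of_pos hb).ne'
    have h1 := ((tendsto_const_nhds (x := (1 : ℝ) / 2)).mul
      (Real.GammaSeq_tendsto_Gamma (x / 2))).mul
      (Real.GammaSeq_tendsto_Gamma (1 / 2)) |>.div
      (Real.GammaSeq_tendsto_Gamma ((x + 1) / 2)) hΓb |>.mul htail
    convert h1 using 2
    · rfl
    rw [Real.Gamma_one_half_eq, Gammat]
    ring
  refine Tendsto.congr' ?_ hmain
  filter_upwards [eventually_ge_atTop 1] with m hm
  -- rewrite the product over Icc as products over range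
  have hIcc : ∀ f : ℕ → ℝ, ∏ k ∈ Finset.Icc 1 m, f k = ∏ j ∈ Finset.range m, f (1 + j) := by
    intro f
    rw [← Finset.Ico_add_one_right_eq_Icc, Finset.prod_Ico_eq_prod_range]
    simp
  have hm0 : (0 : ℝ) < m := by exact_mod_cast hm
  set a := x / 2 with hadef
  set b := (x + 1) / 2 with hbdef
  set c := (1 : ℝ) / 2 with hcdef
  have hR : ∀ s : ℝ, 0 < s → (0 : ℝ) < ∏ j ∈ Finset.range (m + 1), (s + j) := by
    intro s hs
    exact Finset.prod_pos fun j _ => by positivity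
  have hRa := hR a ha
  have hRb := hR b hb
  have hRc := hR c hc
  have hsplit : ∏ k ∈ Finset.Icc 1 m, ((2 * (k : ℝ) / (x + 2 * k)) *
      ((x + 2 * k - 1) / (2 * k - 1))) =
      (∏ j ∈ Finset.range m, ((1 + j : ℕ) : ℝ) / (a + (1 + j : ℕ))) *
      ∏ j ∈ Finset.range m, ((b + j) / (c + j)) := by
    rw [hIcc, ← Finset.prod_mul_distrib]
    refine Finset.prod_congr rfl fun j _ => ?_
    push_cast
    rw [hadef, hbdef, hcdef]
    have hj : (0 : ℝ) ≤ j := j.cast_nonneg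
    have h1 : (0 : ℝ) < x + 2 * (1 + (j : ℝ)) := by nlinarith
    have h2 : (0 : ℝ) < 2 * (1 + (j : ℝ)) - 1 := by nlinarith
    have h3 : (0 : ℝ) < x / 2 + (1 + (j : ℝ)) := by nlinarith
    have h4 : (0 : ℝ) < 1 / 2 + (j : ℝ) := by nlinarith
    rw [div_mul_div_comm, div_mul_div_comm]
    rw [div_eq_div_iff (mul_pos h1 h2).ne' (mul_pos h3 h4).ne']
    ring
  -- express the range products via the GammaSeq denominators
  have hprodA : ∏ j ∈ Finset.range m, (a + ((1 + j : ℕ) : ℝ)) =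
      (∏ j ∈ Finset.range (m + 1), (a + j)) / a := by
    rw [Finset.prod_range_succ' (fun j => a + (j : ℝ))]
    push_cast
    rw [mul_div_assoc]
    simp [ha.ne']
    exact Finset.prod_congr rfl fun j _ => by ring
  have hprodB : ∀ s : ℝ, 0 < s → ∏ j ∈ Finset.range m, (s + (j : ℝ)) =
      (∏ j ∈ Finset.range (m + 1), (s + j)) / (s + m) := by
    intro s hs
    rw [Finset.prod_range_succ]
    have h : s + (m : ℝ) ≠ 0 := by positivity
    field_simp
  have hnum : ∏ j ∈ Finset.range m, (((1 + j : ℕ) : ℝ)) = (Nat.factorial m : ℝ) := by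
    rw [← Nat.cast_prod]
    congr 1
    rw [← Finset.prod_range_add_one_eq_factorial]
    exact Finset.prod_congr rfl fun j _ => Nat.add_comm 1 j
  have hxa : x = 2 * a := by rw [hadef]; ring
  have hbac : (m : ℝ) ^ b = (m : ℝ) ^ a * (m : ℝ) ^ c := by
    rw [show b = a + c by rw [hadef, hbdef, hcdef]; ring, Real.rpow_add hm0]
  have hfac : ((Nat.factorial m : ℝ)) ≠ 0 := by positivity
  have hma : (0:ℝ) < (m:ℝ) ^ a := Real.rpow_pos_of_pos hm0 _
  have hmb : (0:ℝ) < (m:ℝ) ^ b := Real.rpow_pos_of_pos hm0 _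
  have hmc : (0:ℝ) < (m:ℝ) ^ c := Real.rpow_pos_of_pos hm0 _
  have hbm : (0:ℝ) < b + m := by positivity
  have hcm : (0:ℝ) < c + m := by positivity
  simp only [Real.GammaSeq]
  rw [hsplit, Finset.prod_div_distrib, Finset.prod_div_distrib, hnum, hprodA, hprodB b hb, hprodB c hc,
    hbac]
  field_simp
  ring
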